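/- Fix τ ∈ ℝ and ω ∈ U, and let λ = λ(ω), the vectors v₋⁺, v₋⁻, v₊⁻ and the coefficients A, B be as in the context. Define η₊ : ℝ → ℂ² by η₊(x) = e^(-λx)·v₊⁻ for x ≥ 0 and η₊(x) = A·e^(λx)·v₋⁺ + B·e^(-λx)·v₋⁻ for x < 0. Then η₊ is continuous on ℝ, differentiable at every x ≠ 0, satisfies the dislocated Dirac eigenvalue equation at parameter τ with spectral parameter ω at every x ≠ 0 (i.e. i·σ₃·η₊'(x) + σ₁·η₊(x) = ω·η₊(x) for x < 0 and i·σ₃·η₊'(x) + σ⋆(τ)·η₊(x) = ω·η₊(x) for x > 0), and η₊(x) → 0 as x → +∞. -/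

import Mathlib

open Complex Filter Matrix

/-- `U = ℂ \ ((-∞,-1] ∪ [1,∞))`. -/
def U : Set ℂ := {ω : ℂ | ω.im ≠ 0 ∨ (-1 < ω.re ∧ ω.re < 1)}

/-- `λ(ω) = (1-ω²)^(1/2)`, principal branch of the complex square root. -/
noncomputable def lam (ω : ℂ) : ℂ := (1 - ω ^ 2) ^ ((1 : ℂ) / 2)

/-- Pauli matrix σ₁. -/
def σ1 : Matrix (Fin 2) (Fin 2) ℂ := !![0, 1; 1, 0]

/-- Pauli matrix σ₃. -/
def σ3 : Matrix (Fin 2) (Fin 2) ℂ := !![1, 0; 0, -1]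

/-- σ⋆(τ) = [[0, e^(-iτ)],[e^(iτ), 0]]. -/
noncomputable def σstar (τ : ℝ) : Matrix (Fin 2) (Fin 2) ℂ :=
  !![0, Complex.exp (-(Complex.I * τ)); Complex.exp (Complex.I * τ), 0]

/-- The decaying solution η₊: equal to `e^(-λx)·v₊⁻` for `x ≥ 0` and to
`A·e^(λx)·v₋⁺ + B·e^(-λx)·v₋⁻` for `x < 0`. -/
noncomputable def ηplus (τ : ℝ) (ω : ℂ) (x : ℝ) : Fin 2 → ℂ :=
  if 0 ≤ x then
    Complex.exp (-(lam ω) * x) • ![Complex.exp (-(Complex.I * τ)), ω + Complex.I * lam ω]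
  else
    ((Complex.exp (-(Complex.I * τ)) - 1) * (ω + Complex.I * lam ω) / (2 * Complex.I * lam ω)
        * Complex.exp (lam ω * x)) • ![1, ω - Complex.I * lam ω]
    + ((ω * (1 - Complex.exp (-(Complex.I * τ)))
          + Complex.I * lam ω * (1 + Complex.exp (-(Complex.I * τ)))) / (2 * Complex.I * lam ω)
        * Complex.exp (-(lam ω) * x)) • ![1, ω + Complex.I * lam ω]

/- ### Auxiliary definitions and lemmas -/

noncomputable def coefA (τ : ℝ) (ω : ℂ) : ℂ :=
  (Complex.exp (-(Complex.I * τ)) - 1) * (ω + Complex.I * lam ω) / (2 * Complex.I * lam ω)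

noncomputable def coefB (τ : ℝ) (ω : ℂ) : ℂ :=
  (ω * (1 - Complex.exp (-(Complex.I * τ)))
      + Complex.I * lam ω * (1 + Complex.exp (-(Complex.I * τ)))) / (2 * Complex.I * lam ω)

noncomputable def fpos (τ : ℝ) (ω : ℂ) (x : ℝ) : Fin 2 → ℂ :=
  Complex.exp (-(lam ω) * x) • ![Complex.exp (-(Complex.I * τ)), ω + Complex.I * lam ω]

noncomputable def gneg (τ : ℝ) (ω : ℂ) (x : ℝ) : Fin 2 → ℂ :=
  (coefA τ ω * Complex.exp (lam ω * x)) • ![1, ω - Complex.I * lam ω]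
    + (coefB τ ω * Complex.exp (-(lam ω) * x)) • ![1, ω + Complex.I * lam ω]

lemma ηplus_eq (τ : ℝ) (ω : ℂ) :
    ηplus τ ω = fun x => if 0 ≤ x then fpos τ ω x else gneg τ ω x := rfl

lemma lam_spec (ω : ℂ) (hω : ω ∈ U) : lam ω ^ 2 = 1 - ω ^ 2 ∧ 0 < (lam ω).re := by
  have hcond : (1 - ω ^ 2).im ≠ 0 ∨ 0 < (1 - ω ^ 2).re := by
    rcases eq_or_ne ω.im 0 with him | him
    · right
      rcases hω with h | ⟨h1, h2⟩
      · exact absurd him h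
      · simp only [Complex.sub_re, Complex.one_re, pow_two, Complex.mul_re, him]
        nlinarith
    · rcases eq_or_ne ω.re 0 with hre | hre
      · right
        simp only [Complex.sub_re, Complex.one_re, pow_two, Complex.mul_re, hre]
        nlinarith [sq_nonneg ω.im]
      · left
        simp only [Complex.sub_im, Complex.one_im, pow_two, Complex.mul_im]
        have := mul_ne_zero hre him
        intro hc
        apply this
        linarith [hc]
  have hz : (1 : ℂ) - ω ^ 2 ≠ 0 := by
    intro h
    rcases hcond with h' | h' <;> rw [h] at h' <;> simp at h'
  constructor
  · rw [lam, sq, ← Complex.cpow_add _ _ hz]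
    norm_num
  · have hπ : (1 - ω ^ 2).arg ≠ Real.pi := by
      intro h
      rw [Complex.arg_eq_pi_iff] at h
      obtain ⟨h1, h2⟩ := h
      rcases hcond with h' | h'
      · exact h' h2
      · linarith
    have harg1 : -Real.pi < (1 - ω ^ 2).arg := Complex.neg_pi_lt_arg _
    have harg2 : (1 - ω ^ 2).arg < Real.pi := lt_of_le_of_ne (Complex.arg_le_pi _) hπ
    rw [lam, Complex.cpow_def_of_ne_zero hz, Complex.exp_re]
    apply mul_pos (Real.exp_pos _)
    apply Real.cos_pos_of_mem_Ioo
    have him : (Complex.log (1 - ω ^ 2) * (1 / 2)).im = (1 - ω ^ 2).arg / 2 := by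
      have h12 : ((1 : ℂ) / 2) = ((1 / 2 : ℝ) : ℂ) := by norm_num
      rw [h12, Complex.mul_im]
      simp [Complex.log_im]
      ring
    rw [him]
    constructor <;> [linarith; linarith]

lemma hasDerivAt_expc (a : ℂ) (x : ℝ) :
    HasDerivAt (fun y : ℝ => Complex.exp (a * y)) (a * Complex.exp (a * x)) x := by
  have h1 : HasDerivAt (fun y : ℝ => (y : ℂ)) 1 x := by
    simpa using (hasDerivAt_id x).ofReal_comp
  simpa [mul_comm] using (h1.const_mul a).cexp

lemma fpos_hasDerivAt (τ : ℝ) (ω : ℂ) (x : ℝ) :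
    HasDerivAt (fpos τ ω)
      ((-(lam ω) * Complex.exp (-(lam ω) * x)) •
        ![Complex.exp (-(Complex.I * τ)), ω + Complex.I * lam ω]) x :=
  (hasDerivAt_expc (-(lam ω)) x).smul_const _

lemma gneg_hasDerivAt (τ : ℝ) (ω : ℂ) (x : ℝ) :
    HasDerivAt (gneg τ ω)
      ((coefA τ ω * (lam ω * Complex.exp (lam ω * x))) • ![1, ω - Complex.I * lam ω]
        + (coefB τ ω * (-(lam ω) * Complex.exp (-(lam ω) * x))) •
            ![1, ω + Complex.I * lam ω]) x :=
  ((((hasDerivAt_expc (lam ω) x).const_mul (coefA τ ω)).smul_const _)).add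
    ((((hasDerivAt_expc (-(lam ω)) x).const_mul (coefB τ ω)).smul_const _))

theorem stmt2 (τ : ℝ) (ω : ℂ) (hω : ω ∈ U) :
    Continuous (ηplus τ ω) ∧
    (∀ x : ℝ, x ≠ 0 → DifferentiableAt ℝ (ηplus τ ω) x) ∧
    (∀ x : ℝ, x < 0 →
      Complex.I • σ3.mulVec (deriv (ηplus τ ω) x) + σ1.mulVec (ηplus τ ω x)
        = ω • ηplus τ ω x) ∧
    (∀ x : ℝ, 0 < x →
      Complex.I • σ3.mulVec (deriv (ηplus τ ω) x) + (σstar τ).mulVec (ηplus τ ω x)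
        = ω • ηplus τ ω x) ∧
    Tendsto (ηplus τ ω) atTop (nhds 0) := by
  obtain ⟨hsq, hre⟩ := lam_spec ω hω
  have hlne : lam ω ≠ 0 := fun h => by simp [h] at hre
  have hηf : ∀ x : ℝ, 0 ≤ x → ηplus τ ω x = fpos τ ω x := by
    intro x hx; rw [ηplus_eq]; exact if_pos hx
  have hηg : ∀ x : ℝ, x < 0 → ηplus τ ω x = gneg τ ω x := by
    intro x hx; rw [ηplus_eq]; exact if_neg (not_le.2 hx)
  have hevf : ∀ x : ℝ, 0 < x → ηplus τ ω =ᶠ[nhds x] fpos τ ω := by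
    intro x hx
    filter_upwards [Ioi_mem_nhds hx] with y hy
    exact hηf y (le_of_lt hy)
  have hevg : ∀ x : ℝ, x < 0 → ηplus τ ω =ᶠ[nhds x] gneg τ ω := by
    intro x hx
    filter_upwards [Iio_mem_nhds hx] with y hy
    exact hηg y hy
  have hEE : Complex.exp (Complex.I * τ) * Complex.exp (-(Complex.I * τ)) = 1 := by
    rw [← Complex.exp_add]; simp
  refine ⟨?_, ?_, ?_, ?_, ?_⟩
  · -- continuity
    rw [ηplus_eq]
    have hcf : Continuous (fpos τ ω) := by
      unfold fpos
      exact (Complex.continuous_exp.comp (continuous_const.mul Complex.continuous_ofReal)).smul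
        continuous_const
    have hcg : Continuous (gneg τ ω) := by
      unfold gneg
      exact (((continuous_const.mul (Complex.continuous_exp.comp
          (continuous_const.mul Complex.continuous_ofReal))).smul continuous_const).add
        ((continuous_const.mul (Complex.continuous_exp.comp
          (continuous_const.mul Complex.continuous_ofReal))).smul continuous_const))
    have h0 : fpos τ ω 0 = gneg τ ω 0 := by
      funext i
      fin_cases i <;>
        simp [fpos, gneg, coefA, coefB] <;>
        field_simp <;> ring
    exact Continuous.if_le hcf hcg continuous_const continuous_id fun x hx => hx ▸ h0
  · -- differentiability
    intro x hx
    rcases hx.lt_or_gt with h | h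
    · exact ((hevg x h).differentiableAt_iff).2 (gneg_hasDerivAt τ ω x).differentiableAt
    · exact ((hevf x h).differentiableAt_iff).2 (fpos_hasDerivAt τ ω x).differentiableAt
  · -- equation for x < 0
    intro x hx
    rw [(hevg x hx).deriv_eq, (gneg_hasDerivAt τ ω x).deriv, hηg x hx]
    funext i
    fin_cases i <;>
      simp [gneg, σ1, σ3, Matrix.mulVec, dotProduct, Fin.sum_univ_two, neg_mul]
    · ring
    · linear_combination
        (-(coefA τ ω * Complex.exp (lam ω * x) + coefB τ ω * Complex.exp (-(lam ω * (x:ℂ))))) * hsq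
          + (coefA τ ω * lam ω ^ 2 * Complex.exp (lam ω * x)
              + coefB τ ω * lam ω ^ 2 * Complex.exp (-(lam ω * (x:ℂ)))) * Complex.I_sq
  · -- equation for x > 0
    intro x hx
    rw [(hevf x hx).deriv_eq, (fpos_hasDerivAt τ ω x).deriv, hηf x (le_of_lt hx)]
    funext i
    fin_cases i <;>
      simp [fpos, σstar, σ3, Matrix.mulVec, dotProduct, Fin.sum_univ_two, neg_mul]
    · ring
    · linear_combination (-(Complex.exp (-(lam ω * (x:ℂ))))) * hsq
        + Complex.exp (-(lam ω * (x:ℂ))) * hEE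
        + lam ω ^ 2 * Complex.exp (-(lam ω * (x:ℂ))) * Complex.I_sq
  · -- decay at +∞
    have hT0 : Tendsto (fun x : ℝ => Complex.exp (-(lam ω) * x)) atTop (nhds 0) := by
      rw [tendsto_zero_iff_norm_tendsto_zero]
      have heq : (fun x : ℝ => ‖Complex.exp (-(lam ω) * x)‖)
          = fun x : ℝ => Real.exp (-((lam ω).re * x)) := by
        funext x
        rw [Complex.norm_exp]
        congr 1
        simp [Complex.mul_re]
      rw [heq]
      apply Real.tendsto_exp_atBot.comp
      exact tendsto_neg_atBot_iff.2 (Tendsto.const_mul_atTop hre tendsto_id)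
    have hTf : Tendsto (fpos τ ω) atTop (nhds 0) := by
      unfold fpos
      simpa using hT0.smul_const
        ![Complex.exp (-(Complex.I * τ)), ω + Complex.I * lam ω]
    refine Tendsto.congr' ?_ hTf
    filter_upwards [eventually_ge_atTop (0 : ℝ)] with x hx
    exact (hηf x hx).symm
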